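/- Let d ≥ 1, τ > 0, and q a natural number. If K : ℝ × ℝ^d × ℝ^d → ℝ^d is q times continuously differentiable and x, y : ℝ → ℝ^d are q times continuously differentiable, then the function t ↦ I_K[x,y](t) = ∫_{−τ}^0 K(θ, x(t+θ), y(t+θ)) dθ is q times continuously differentiable on ℝ. -/

import Mathlib

open Real MeasureTheory intervalIntegral

lemma aux_parametric {E : Type*} [NormedAddCommGroup E] [NormedSpace ℝ E] (a b : ℝ) :
    ∀ (n : ℕ) (G : ℝ × ℝ → E), ContDiff ℝ n G →
      ContDiff ℝ n (fun t : ℝ => ∫ θ in a..b, G (t, θ)) := by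
  intro n
  induction n with
  | zero =>
    intro G hG
    rw [Nat.cast_zero, contDiff_zero]
    exact continuous_parametric_intervalIntegral_of_continuous'
      (f := fun t θ => G (t, θ)) (μ := volume) hG.continuous a b
  | succ n ih =>
    intro G hG
    have hG1 : Differentiable ℝ G := hG.differentiable (by simp)
    set G' : ℝ × ℝ → E := fun p => fderiv ℝ G p (1, 0) with hG'def
    have hfd : ContDiff ℝ n (fderiv ℝ G) := by
      have := hG
      rw [show ((n + 1 : ℕ) : WithTop ℕ∞) = (n : WithTop ℕ∞) + 1 by push_cast; rfl,
        contDiff_succ_iff_fderiv] at this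
      exact this.2.2
    have hG' : ContDiff ℝ n G' :=
      (ContinuousLinearMap.apply ℝ E ((1 : ℝ), (0 : ℝ))).contDiff.comp hfd
    have hderiv : ∀ t θ : ℝ, HasDerivAt (fun s => G (s, θ)) (G' (t, θ)) t := by
      intro t θ
      exact (hG1 (t, θ)).hasFDerivAt.comp_hasDerivAt t
        ((hasDerivAt_id t).prodMk (hasDerivAt_const t θ))
    have key : ∀ x₀ : ℝ, HasDerivAt (fun t : ℝ => ∫ θ in a..b, G (t, θ))
        (∫ θ in a..b, G' (x₀, θ)) x₀ := by
      intro x₀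
      obtain ⟨C, hC⟩ := (((isCompact_closedBall x₀ 1).prod isCompact_uIcc)).exists_bound_of_continuousOn
        hG'.continuous.continuousOn
      refine (intervalIntegral.hasDerivAt_integral_of_dominated_loc_of_deriv_le
        (F := fun t θ => G (t, θ)) (F' := fun t θ => G' (t, θ)) (bound := fun _ => C)
        (Metric.ball_mem_nhds x₀ one_pos) ?_ ?_ ?_ ?_ ?_ ?_).2
      · exact Filter.Eventually.of_forall fun t =>
          (hG.continuous.comp (continuous_const.prodMk continuous_id)).aestronglyMeasurable
      · exact (hG.continuous.comp (continuous_const.prodMk continuous_id)).intervalIntegrable a b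
      · exact (hG'.continuous.comp (continuous_const.prodMk continuous_id)).aestronglyMeasurable
      · refine Filter.Eventually.of_forall fun θ hθ t ht => hC (t, θ) ?_
        exact ⟨Metric.ball_subset_closedBall ht, Set.uIoc_subset_uIcc hθ⟩
      · exact intervalIntegrable_const
      · exact Filter.Eventually.of_forall fun θ _ t _ => hderiv t θ
    have hdiff : Differentiable ℝ (fun t : ℝ => ∫ θ in a..b, G (t, θ)) :=
      fun t => (key t).differentiableAt
    rw [show ((n + 1 : ℕ) : WithTop ℕ∞) = (n : WithTop ℕ∞) + 1 by push_cast; rfl,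
      contDiff_succ_iff_deriv]
    refine ⟨hdiff, by simp, ?_⟩
    have : deriv (fun t : ℝ => ∫ θ in a..b, G (t, θ))
        = fun t : ℝ => ∫ θ in a..b, G' (t, θ) := funext fun t => (key t).deriv
    rw [this]
    exact ih G' hG'

/-- If `K : ℝ × ℝ^d × ℝ^d → ℝ^d` is `q` times continuously differentiable and
`x, y : ℝ → ℝ^d` are `q` times continuously differentiable, then
`t ↦ ∫_{−τ}^0 K(θ, x(t+θ), y(t+θ)) dθ` is `q` times continuously
differentiable on `ℝ`. -/
theorem stmt3 (d q : ℕ) (hd : 1 ≤ d) (τ : ℝ) (hτ : 0 < τ)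
    (K : ℝ × (Fin d → ℝ) × (Fin d → ℝ) → Fin d → ℝ) (hK : ContDiff ℝ q K)
    (x y : ℝ → Fin d → ℝ) (hx : ContDiff ℝ q x) (hy : ContDiff ℝ q y) :
    ContDiff ℝ q (fun t : ℝ => ∫ θ in (-τ)..0, K (θ, x (t + θ), y (t + θ))) := by
  have hG : ContDiff ℝ q (fun p : ℝ × ℝ => K (p.2, x (p.1 + p.2), y (p.1 + p.2))) := by
    apply hK.comp
    exact contDiff_snd.prodMk ((hx.comp (contDiff_fst.add contDiff_snd)).prodMk
      (hy.comp (contDiff_fst.add contDiff_snd)))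
  exact aux_parametric (-τ) 0 q _ hG
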